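/- Let X and Y be compact Hausdorff spaces and let Φ be a set of homeomorphisms X → Y, identified with their graphs as closed subsets of X × Y. Then Φ is equicontinuous at a point p ∈ X if and only if every element s of the closure of Φ in the Vietoris topology on the space of closed subsets of X × Y intersects the fiber {p} × Y in exactly one point. -/

import Mathlib

/-- The hyperspace of closed subsets of a topological space. -/
def ClosedSubsets (Z : Type*) [TopologicalSpace Z] := {s : Set Z // IsClosed s}

/-- The Vietoris topology on the hyperspace of closed subsets. -/
instance ClosedSubsets.instTopologicalSpace (Z : Type*) [TopologicalSpace Z] :
    TopologicalSpace (ClosedSubsets Z) :=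
  TopologicalSpace.generateFrom
    ({A | ∃ o : Set Z, IsOpen o ∧ A = {c : ClosedSubsets Z | c.val ⊆ o}} ∪
     {A | ∃ o : Set Z, IsOpen o ∧ A = {c : ClosedSubsets Z | (c.val ∩ o).Nonempty}})

/-- The graph of a homeomorphism, as a closed subset of `X × Y`. -/
def homeoGraph {X Y : Type*} [TopologicalSpace X] [TopologicalSpace Y] [T2Space Y]
    (φ : X ≃ₜ Y) : ClosedSubsets (X × Y) :=
  ⟨{p : X × Y | p.2 = φ p.1}, isClosed_eq continuous_snd (φ.continuous.comp continuous_fst)⟩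

namespace VietorisAux

open Set Filter Topology TopologicalSpace

variable {Z : Type*} [TopologicalSpace Z]

/-- The subbasis of the Vietoris topology. -/
def sub (Z : Type*) [TopologicalSpace Z] : Set (Set (ClosedSubsets Z)) :=
  ({A | ∃ o : Set Z, IsOpen o ∧ A = {c : ClosedSubsets Z | c.val ⊆ o}} ∪
   {A | ∃ o : Set Z, IsOpen o ∧ A = {c : ClosedSubsets Z | (c.val ∩ o).Nonempty}})

lemma isOpen_of_mem_sub {A : Set (ClosedSubsets Z)} (h : A ∈ sub Z) : IsOpen A :=
  TopologicalSpace.isOpen_generateFrom_of_mem h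

lemma generateOpen_of_isOpen {N : Set (ClosedSubsets Z)} (h : IsOpen N) :
    TopologicalSpace.GenerateOpen (sub Z) N := h

variable {I : Type*} (𝒰 : Ultrafilter I) (g : I → ClosedSubsets Z)

/-- The "ultrafilter limit" of a family of closed sets. -/
def uLim : Set Z :=
  {z | ∀ O : Set Z, IsOpen O → z ∈ O → {i | ((g i).1 ∩ O).Nonempty} ∈ 𝒰}

lemma isClosed_uLim : IsClosed (uLim 𝒰 g) := by
  rw [← isOpen_compl_iff, isOpen_iff_forall_mem_open]
  intro z hz
  simp only [uLim, mem_compl_iff, mem_setOf_eq, not_forall] at hz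
  obtain ⟨O, hO, hzO, hmem⟩ := hz
  exact ⟨O, fun z' hz' h => hmem (h O hO hz'), hO, hzO⟩

lemma mem_uLim_of_tendsto {a : I → Z} (ha : ∀ᶠ i in (𝒰 : Filter I), a i ∈ (g i).1) {z : Z}
    (h : Filter.Tendsto a 𝒰 (nhds z)) : z ∈ uLim 𝒰 g := by
  intro O hO hzO
  have h1 : ∀ᶠ i in (𝒰 : Filter I), a i ∈ O := h (hO.mem_nhds hzO)
  filter_upwards [h1, ha] with i hi hai
  exact ⟨a i, hai, hi⟩

lemma uLim_mem_closure [CompactSpace Z] {T : Set (ClosedSubsets Z)}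
    (hg : ∀ i, g i ∈ T) :
    (⟨uLim 𝒰 g, isClosed_uLim 𝒰 g⟩ : ClosedSubsets Z) ∈ closure T := by
  set s : ClosedSubsets Z := (⟨uLim 𝒰 g, isClosed_uLim 𝒰 g⟩ : ClosedSubsets Z) with hs_def
  refine (@mem_closure_iff (ClosedSubsets Z) (ClosedSubsets.instTopologicalSpace Z) s T).mpr
    fun N hNopen hsN => ?_
  have key : ∀ N : Set (ClosedSubsets Z), TopologicalSpace.GenerateOpen (sub Z) N →
      s ∈ N → {i | g i ∈ N} ∈ 𝒰 := by
    intro N hN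
    induction hN with
    | basic A hA =>
      intro hsA
      rcases hA with h1 | h1
      · obtain ⟨o, ho, rfl⟩ := h1
        -- s.1 ⊆ o
        by_contra hc
        rw [← Ultrafilter.compl_mem_iff_notMem] at hc
        have hT' : {i | ((g i).1 ∩ oᶜ).Nonempty} ∈ 𝒰 := by
          refine Filter.mem_of_superset hc ?_
          intro i hi
          simp only [mem_compl_iff, mem_setOf_eq] at hi
          rw [Set.not_subset] at hi
          obtain ⟨z, hz1, hz2⟩ := hi
          exact ⟨z, hz1, hz2⟩
        obtain ⟨i0, hi0⟩ := Ultrafilter.nonempty_of_mem hT'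
        have hZne : Nonempty Z := ⟨hi0.choose⟩
        classical
        set a : I → Z := fun i =>
          if h : ((g i).1 ∩ oᶜ).Nonempty then h.choose else Classical.arbitrary Z with ha_def
        have ha1 : ∀ i ∈ {i | ((g i).1 ∩ oᶜ).Nonempty}, a i ∈ (g i).1 ∩ oᶜ := by
          intro i hi
          have hi' : ((g i).1 ∩ oᶜ).Nonempty := hi
          have heq : a i = hi'.choose := by
            simp only [ha_def]
            exact dif_pos hi'
          rw [heq]
          exact hi'.choose_spec
        obtain ⟨z, -, hz⟩ := isCompact_univ.ultrafilter_le_nhds (𝒰.map a)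
          (Filter.le_principal_iff.mpr Filter.univ_mem)
        have hta : Filter.Tendsto a 𝒰 (nhds z) := hz
        have hzc : z ∈ oᶜ := by
          refine ho.isClosed_compl.mem_of_tendsto hta ?_
          filter_upwards [hT'] with i hi
          exact (ha1 i hi).2
        have hzu : z ∈ uLim 𝒰 g := by
          refine mem_uLim_of_tendsto 𝒰 g ?_ hta
          filter_upwards [hT'] with i hi
          exact (ha1 i hi).1
        exact hzc (hsA hzu)
      · obtain ⟨o, ho, rfl⟩ := h1
        obtain ⟨z, hz1, hz2⟩ := hsA
        exact hz1 o ho hz2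
    | univ => exact fun _ => Filter.univ_mem
    | inter A B hA hB ihA ihB =>
      exact fun hs => Filter.inter_mem (ihA hs.1) (ihB hs.2)
    | sUnion S hS ih =>
      intro hs
      obtain ⟨A, hAS, hsA⟩ := hs
      exact Filter.mem_of_superset (ih A hAS hsA) (fun i hi => ⟨A, hAS, hi⟩)
  obtain ⟨i, hi⟩ := Ultrafilter.nonempty_of_mem (key N (generateOpen_of_isOpen hNopen) hsN)
  exact ⟨g i, hi, hg i⟩

end VietorisAux

open Set Filter Topology TopologicalSpace VietorisAux

/-- A set `Φ` of homeomorphisms between compacta `X` and `Y` is equicontinuous at `p ∈ X`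
iff every element of the Vietoris closure of the set of graphs of members of `Φ` is
single-valued at `p`. -/
theorem equicontinuous_iff_closure_single_valued
    {X Y : Type*} [TopologicalSpace X] [CompactSpace X] [T2Space X]
    [TopologicalSpace Y] [CompactSpace Y] [T2Space Y]
    (Φ : Set (X ≃ₜ Y)) (p : X) :
    (∀ V ∈ nhdsSet (Set.diagonal Y), ∃ U ∈ nhds p,
        ∀ φ ∈ Φ, ∀ x ∈ U, ∀ x' ∈ U, ((φ x, φ x') : Y × Y) ∈ V) ↔
    (∀ s ∈ closure ((fun φ => homeoGraph φ) '' Φ), ∃! y : Y, ((p, y) : X × Y) ∈ s.val) := by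
  constructor
  · intro hequi s hs
    -- Existence of a point above p
    have hex : ∃ y : Y, ((p, y) : X × Y) ∈ s.val := by
      by_contra hno
      push_neg at hno
      set K : Set (X × Y) := ({p} : Set X) ×ˢ (Set.univ : Set Y) with hK
      have hKc : IsClosed K := isClosed_singleton.prod isClosed_univ
      have hopen : IsOpen {c : ClosedSubsets (X × Y) | c.val ⊆ Kᶜ} :=
        isOpen_of_mem_sub (Or.inl ⟨Kᶜ, hKc.isOpen_compl, rfl⟩)
      have hsmem : s ∈ {c : ClosedSubsets (X × Y) | c.val ⊆ Kᶜ} := by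
        intro z hz hzK
        obtain ⟨z1, z2⟩ := z
        obtain ⟨hz1, -⟩ := hzK
        rw [Set.mem_singleton_iff] at hz1
        subst hz1
        exact hno z2 hz
      obtain ⟨c, hcN, hcT⟩ := mem_closure_iff.mp hs _ hopen hsmem
      obtain ⟨φ, -, rfl⟩ := hcT
      have : ((p, φ p) : X × Y) ∈ (homeoGraph φ).val := rfl
      exact hcN this ⟨rfl, trivial⟩
    obtain ⟨y, hy⟩ := hex
    refine ⟨y, hy, fun y' hy' => ?_⟩
    by_contra hne
    -- two distinct points (p, y') and (p, y) in s
    obtain ⟨W1, W2, hW1, hW2, hy'W, hyW, hdisj⟩ := t2_separation hne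
    obtain ⟨B1, hB1o, hB1s, hB1c⟩ := normal_exists_closure_subset isClosed_singleton hW1
      (Set.singleton_subset_iff.mpr hy'W)
    obtain ⟨B2, hB2o, hB2s, hB2c⟩ := normal_exists_closure_subset isClosed_singleton hW2
      (Set.singleton_subset_iff.mpr hyW)
    set V : Set (Y × Y) := (closure B1 ×ˢ closure B2)ᶜ with hVdef
    have hVopen : IsOpen V := (isClosed_closure.prod isClosed_closure).isOpen_compl
    have hdiagV : Set.diagonal Y ⊆ V := by
      rintro ⟨a, b⟩ hab
      rw [Set.mem_diagonal_iff] at hab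
      simp only [hVdef, Set.mem_compl_iff, Set.mem_prod, not_and]
      intro h1 h2
      exact (hdisj.ne_of_mem (hB1c h1) (hB2c h2)) hab
    obtain ⟨U, hU, hprop⟩ := hequi V (hVopen.mem_nhdsSet.mpr hdiagV)
    set U' : Set X := interior U with hU'def
    have hpU' : p ∈ U' := mem_interior_iff_mem_nhds.mpr hU
    have hN1 : IsOpen {c : ClosedSubsets (X × Y) | (c.val ∩ (U' ×ˢ B1)).Nonempty} :=
      isOpen_of_mem_sub (Or.inr ⟨U' ×ˢ B1, isOpen_interior.prod hB1o, rfl⟩)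
    have hN2 : IsOpen {c : ClosedSubsets (X × Y) | (c.val ∩ (U' ×ˢ B2)).Nonempty} :=
      isOpen_of_mem_sub (Or.inr ⟨U' ×ˢ B2, isOpen_interior.prod hB2o, rfl⟩)
    have hsmem : s ∈ {c : ClosedSubsets (X × Y) | (c.val ∩ (U' ×ˢ B1)).Nonempty} ∩
        {c : ClosedSubsets (X × Y) | (c.val ∩ (U' ×ˢ B2)).Nonempty} :=
      ⟨⟨(p, y'), hy', ⟨hpU', hB1s rfl⟩⟩, ⟨(p, y), hy, ⟨hpU', hB2s rfl⟩⟩⟩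
    obtain ⟨c, ⟨hc1, hc2⟩, hcT⟩ := mem_closure_iff.mp hs _ (hN1.inter hN2) hsmem
    obtain ⟨φ, hφ, rfl⟩ := hcT
    obtain ⟨⟨q1, q2⟩, hqg, hq1, hq2⟩ := hc1
    obtain ⟨⟨r1, r2⟩, hrg, hr1, hr2⟩ := hc2
    have hqg' : q2 = φ q1 := hqg
    have hrg' : r2 = φ r1 := hrg
    have := hprop φ hφ q1 (interior_subset hq1) r1 (interior_subset hr1)
    simp only [hVdef, Set.mem_compl_iff, Set.mem_prod, not_and] at this
    exact this (subset_closure (hqg' ▸ hq2)) (subset_closure (hrg' ▸ hr2))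
  · intro hsv
    by_contra hneq
    push_neg at hneq
    obtain ⟨V, hV, hbad⟩ := hneq
    classical
    set I := {U : Set X // U ∈ nhds p} with hIdef
    have hchoice : ∀ i : I, ∃ φ ∈ Φ, ∃ x ∈ i.1, ∃ x' ∈ i.1, ((φ x, φ x') : Y × Y) ∉ V :=
      fun i => hbad i.1 i.2
    choose φ hφ x hx x' hx' hVout using hchoice
    set F : Filter I := ⨅ A : {A : Set X // A ∈ nhds p}, Filter.principal {i : I | i.1 ⊆ A.1}
      with hFdef
    haveI hFne : F.NeBot := by
      haveI : Nonempty I := ⟨⟨Set.univ, Filter.univ_mem⟩⟩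
      refine Filter.iInf_neBot_of_directed ?_ ?_
      · rintro A B
        refine ⟨⟨A.1 ∩ B.1, Filter.inter_mem A.2 B.2⟩, ?_, ?_⟩
        · simp only [ge_iff_le, Filter.principal_mono]
          exact fun i hi => hi.trans Set.inter_subset_left
        · simp only [ge_iff_le, Filter.principal_mono]
          exact fun i hi => hi.trans Set.inter_subset_right
      · intro A
        exact Filter.principal_neBot_iff.mpr ⟨⟨A.1, A.2⟩, show A.1 ⊆ A.1 from subset_rfl⟩
    set 𝒰 : Ultrafilter I := Ultrafilter.of F with h𝒰def
    have h𝒰F : (𝒰 : Filter I) ≤ F := Ultrafilter.of_le F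
    have htail : ∀ A ∈ nhds p, {i : I | i.1 ⊆ A} ∈ 𝒰 := by
      intro A hA
      have h1 : F ≤ Filter.principal {i : I | i.1 ⊆ A} := iInf_le (fun A : {A : Set X // A ∈ nhds p} => Filter.principal {i : I | i.1 ⊆ A.1}) ⟨A, hA⟩
      exact h𝒰F (Filter.le_principal_iff.mp h1)
    have htx : Filter.Tendsto x 𝒰 (nhds p) := by
      rw [Filter.tendsto_def]
      intro A hA
      exact Filter.mem_of_superset (htail A hA) (fun i hi => hi (hx i))
    have htx' : Filter.Tendsto x' 𝒰 (nhds p) := by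
      rw [Filter.tendsto_def]
      intro A hA
      exact Filter.mem_of_superset (htail A hA) (fun i hi => hi (hx' i))
    set g : I → ClosedSubsets (X × Y) := fun i => homeoGraph (φ i) with hgdef
    set a : I → X × Y := fun i => (x i, (φ i) (x i)) with hadef
    set b : I → X × Y := fun i => (x' i, (φ i) (x' i)) with hbdef
    obtain ⟨za, -, hza⟩ := isCompact_univ.ultrafilter_le_nhds (𝒰.map a)
      (Filter.le_principal_iff.mpr Filter.univ_mem)
    obtain ⟨zb, -, hzb⟩ := isCompact_univ.ultrafilter_le_nhds (𝒰.map b)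
      (Filter.le_principal_iff.mpr Filter.univ_mem)
    have hta : Filter.Tendsto a 𝒰 (nhds za) := hza
    have htb : Filter.Tendsto b 𝒰 (nhds zb) := hzb
    have hta1 : Filter.Tendsto (fun i => (a i).1) 𝒰 (nhds za.1) :=
      (continuous_fst.tendsto za).comp hta
    have htb1 : Filter.Tendsto (fun i => (b i).1) 𝒰 (nhds zb.1) :=
      (continuous_fst.tendsto zb).comp htb
    have hza1 : za.1 = p := tendsto_nhds_unique hta1 htx
    have hzb1 : zb.1 = p := tendsto_nhds_unique htb1 htx'
    have hza2 : Filter.Tendsto (fun i => (a i).2) 𝒰 (nhds za.2) :=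
      (continuous_snd.tendsto za).comp hta
    have hzb2 : Filter.Tendsto (fun i => (b i).2) 𝒰 (nhds zb.2) :=
      (continuous_snd.tendsto zb).comp htb
    have hpair : Filter.Tendsto (fun i => ((a i).2, (b i).2)) 𝒰 (nhds (za.2, zb.2)) :=
      hza2.prodMk_nhds hzb2
    have hdiagint : Set.diagonal Y ⊆ interior V := by
      intro q hq
      rw [mem_interior_iff_mem_nhds]
      exact mem_nhdsSet_iff_forall.mp hV q hq
    have hmemc : (za.2, zb.2) ∈ (interior V)ᶜ := by
      refine isOpen_interior.isClosed_compl.mem_of_tendsto hpair ?_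
      refine Filter.Eventually.of_forall (fun i h => ?_)
      exact hVout i (interior_subset h)
    have hne2 : za.2 ≠ zb.2 := by
      intro h
      exact hmemc (hdiagint (by rw [Set.mem_diagonal_iff]; exact h))
    -- the limit set
    set s : ClosedSubsets (X × Y) := ⟨uLim 𝒰 g, isClosed_uLim 𝒰 g⟩ with hsdef
    have hscl : s ∈ closure ((fun φ => homeoGraph φ) '' Φ) :=
      uLim_mem_closure 𝒰 g (fun i => ⟨φ i, hφ i, rfl⟩)
    have hmema : za ∈ uLim 𝒰 g := by
      refine mem_uLim_of_tendsto 𝒰 g ?_ hta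
      exact Filter.Eventually.of_forall (fun i => rfl)
    have hmemb : zb ∈ uLim 𝒰 g := by
      refine mem_uLim_of_tendsto 𝒰 g ?_ htb
      exact Filter.Eventually.of_forall (fun i => rfl)
    obtain ⟨y0, -, huniq⟩ := hsv s hscl
    have h1 : za.2 = y0 := huniq za.2 (by rw [← hza1]; exact hmema)
    have h2 : zb.2 = y0 := huniq zb.2 (by rw [← hzb1]; exact hmemb)
    exact hne2 (h1.trans h2.symm)
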